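/- arXiv:1104.0862 — 5 statements merged into one kernel-verified Lean document; each statement's English description precedes it below -/
import Mathlib

section
/- Let (X^n, Y^n) = (X_0,…,X_n, Y_0,…,Y_n) be random variables with values in the Polish product spaces X_{0,n} and Y_{0,n} under a probability measure P. Then the following two families of conditional independence conditions are equivalent: (i) for each i = 0, 1, …, n−1, Y_i is conditionally independent of (X_{i+1}, …, X_n) given (X^i, Y^{i−1}); (ii) for each i = 0, 1, …, n−1, Y^i is conditionally independent of X_{i+1} given X^i. -/
open MeasureTheory ProbabilityTheory
open scoped ENNReal

noncomputable section

open MeasurableSpace Set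

namespace CondIndepAux

lemma integrableOn_condexp {Ω : Type} {m mΩ : MeasurableSpace Ω} {μ : Measure Ω}
    {f : Ω → ℝ} {s : Set Ω} : IntegrableOn (μ[f|m]) s μ :=
  integrable_condExp.integrableOn

variable {Ω : Type} {mΩ : MeasurableSpace Ω} {μ : Measure Ω}

lemma drop_mono [IsProbabilityMeasure μ] {m' mA mB : MeasurableSpace Ω}
    (h'A : m' ≤ mA) (hAB : mA ≤ mB) (hB : mB ≤ mΩ) {f : Ω → ℝ}
    (h : μ[f|mB] =ᵐ[μ] μ[f|m']) :
    μ[f|mA] =ᵐ[μ] μ[f|m'] := by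
  have hAΩ : mA ≤ mΩ := hAB.trans hB
  have h1 : μ[μ[f|mB]|mA] =ᵐ[μ] μ[f|mA] := condExp_condExp_of_le hAB hB
  have h2 : μ[μ[f|mB]|mA] =ᵐ[μ] μ[μ[f|m']|mA] := condExp_congr_ae h
  have h3 : μ[μ[f|m']|mA] = μ[f|m'] :=
    condExp_of_stronglyMeasurable hAΩ
      (stronglyMeasurable_condExp.mono h'A) integrable_condExp
  exact h1.symm.trans (h2.trans (by rw [h3]))

lemma sup_eq_generateFrom_inter (m' m₁ : MeasurableSpace Ω) :
    m' ⊔ m₁ = MeasurableSpace.generateFrom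
      {s | ∃ s1 s2, MeasurableSet[m'] s1 ∧ MeasurableSet[m₁] s2 ∧ s = s1 ∩ s2} := by
  refine le_antisymm (sup_le ?_ ?_) (generateFrom_le ?_)
  · intro s hs
    exact measurableSet_generateFrom ⟨s, univ, hs, MeasurableSet.univ, (inter_univ s).symm⟩
  · intro s hs
    exact measurableSet_generateFrom ⟨univ, s, MeasurableSet.univ, hs, (univ_inter s).symm⟩
  · rintro s ⟨s1, s2, h1, h2, rfl⟩
    exact ((le_sup_left : m' ≤ m' ⊔ m₁) _ h1).inter ((le_sup_right : m₁ ≤ m' ⊔ m₁) _ h2)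

lemma isPiSystem_inter (m' m₁ : MeasurableSpace Ω) :
    IsPiSystem {s | ∃ s1 s2, MeasurableSet[m'] s1 ∧ MeasurableSet[m₁] s2 ∧ s = s1 ∩ s2} := by
  rintro s ⟨s1, s2, h1, h2, rfl⟩ t ⟨t1, t2, g1, g2, rfl⟩ _
  exact ⟨s1 ∩ t1, s2 ∩ t2, h1.inter g1, h2.inter g2, by rw [inter_inter_inter_comm]⟩

lemma indicator_mul_eq (t : Set Ω) (g : Ω → ℝ) :
    (fun x => g x * t.indicator (fun _ => (1:ℝ)) x) = t.indicator g := by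
  funext x
  by_cases hx : x ∈ t <;> simp [hx]

lemma integrable_indicator_one [IsFiniteMeasure μ] {t : Set Ω} (ht : MeasurableSet[mΩ] t) :
    Integrable (t.indicator fun _ => (1:ℝ)) μ :=
  (integrable_const (1:ℝ)).indicator ht

lemma integrable_indicator' {f : Ω → ℝ} (hf : Integrable f μ) {t : Set Ω}
    (ht : MeasurableSet[mΩ] t) : Integrable (t.indicator f) μ :=
  hf.indicator ht

lemma integrable_indicator_condexp [IsFiniteMeasure μ] {t : Set Ω} (ht : MeasurableSet[mΩ] t)
    {m : MeasurableSpace Ω} {f : Ω → ℝ} :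
    Integrable (t.indicator (μ[f|m])) μ :=
  integrable_indicator' integrable_condExp ht

lemma measurableSet_inter' {t1 t2 : Set Ω} (h1 : MeasurableSet[mΩ] t1)
    (h2 : MeasurableSet[mΩ] t2) : MeasurableSet[mΩ] (t1 ∩ t2) :=
  h1.inter h2

lemma indicator_one_mul_indicator_one (t1 t2 : Set Ω) :
    t1.indicator (fun _ => (1:ℝ)) * t2.indicator (fun _ => (1:ℝ))
      = (t1 ∩ t2).indicator (fun _ => (1:ℝ)) := by
  rw [show (t1 ∩ t2).indicator (fun _ => (1:ℝ)) = (t1 ∩ t2).indicator (1 : Ω → ℝ) from rfl,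
    inter_indicator_one]
  rfl

lemma setIntegral_indicator' {s t : Set Ω} (ht : MeasurableSet[mΩ] t) (f : Ω → ℝ) :
    ∫ x in s, t.indicator f x ∂μ = ∫ x in s ∩ t, f x ∂μ :=
  setIntegral_indicator ht

lemma setIntegral_congr_ae' {s : Set Ω} (hs : MeasurableSet[mΩ] s) {f g : Ω → ℝ}
    (h : f =ᵐ[μ] g) : ∫ x in s, f x ∂μ = ∫ x in s, g x ∂μ :=
  setIntegral_congr_ae hs (h.mono fun _ hx _ => hx)

lemma integral_add_compl' {s : Set Ω} (hs : MeasurableSet[mΩ] s) {f : Ω → ℝ}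
    (hf : Integrable f μ) : ∫ x in s, f x ∂μ + ∫ x in sᶜ, f x ∂μ = ∫ x, f x ∂μ :=
  integral_add_compl hs hf

lemma integral_iUnion' {g : ℕ → Set Ω} (hm : ∀ i, MeasurableSet[mΩ] (g i))
    (hd : Pairwise (Function.onFun Disjoint g)) {f : Ω → ℝ} (hf : Integrable f μ) :
    ∫ x in ⋃ i, g i, f x ∂μ = ∑' i, ∫ x in g i, f x ∂μ :=
  integral_iUnion hm hd hf.integrableOn

lemma condIndep_of_drop [StandardBorelSpace Ω] [IsProbabilityMeasure μ]
    {m' m₁ m₂ : MeasurableSpace Ω}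
    (hm' : m' ≤ mΩ) (hm₁ : m₁ ≤ mΩ) (hm₂ : m₂ ≤ mΩ)
    (h : ∀ t, MeasurableSet[m₂] t → (μ⟦t | m' ⊔ m₁⟧) =ᵐ[μ] (μ⟦t | m'⟧)) :
    CondIndep m' m₁ m₂ hm' μ := by
  rw [condIndep_iff _ _ _ hm' hm₁ hm₂ _]
  intro t1 t2 h1 h2
  have ht1 : MeasurableSet[mΩ] t1 := hm₁ _ h1
  have ht2 : MeasurableSet[mΩ] t2 := hm₂ _ h2
  set f1 : Ω → ℝ := t1.indicator (fun _ => (1:ℝ)) with hf1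
  set f2 : Ω → ℝ := t2.indicator (fun _ => (1:ℝ)) with hf2
  have hsup : m' ⊔ m₁ ≤ mΩ := sup_le hm' hm₁
  have hmul : f1 * f2 = (t1 ∩ t2).indicator (fun _ => (1:ℝ)) :=
    indicator_one_mul_indicator_one t1 t2
  have hint12 : Integrable (f1 * f2) μ := by
    rw [hmul]; exact integrable_indicator_one (measurableSet_inter' ht1 ht2)
  have hint2 : Integrable f2 μ := integrable_indicator_one ht2
  have hsm1 : StronglyMeasurable[m' ⊔ m₁] f1 :=
    stronglyMeasurable_const.indicator ((le_sup_right : m₁ ≤ m' ⊔ m₁) _ h1)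
  have step1 : (μ⟦t1 ∩ t2 | m'⟧) =ᵐ[μ] μ[μ[f1 * f2 | m' ⊔ m₁]|m'] := by
    rw [show (t1 ∩ t2).indicator (fun _ => (1:ℝ)) = f1 * f2 by rw [hmul]]
    exact (condExp_condExp_of_le (le_sup_left : m' ≤ m' ⊔ m₁) hsup).symm
  have step2 : μ[f1 * f2 | m' ⊔ m₁] =ᵐ[μ] f1 * μ[f2 | m' ⊔ m₁] :=
    condExp_mul_of_stronglyMeasurable_left hsm1 hint12 hint2
  have step3 : (f1 * μ[f2 | m' ⊔ m₁] : Ω → ℝ) =ᵐ[μ] f1 * (μ⟦t2 | m'⟧) :=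
    Filter.EventuallyEq.mul Filter.EventuallyEq.rfl (h t2 h2)
  have step4 : μ[μ[f1 * f2 | m' ⊔ m₁]|m'] =ᵐ[μ] μ[f1 * (μ⟦t2 | m'⟧)|m'] :=
    condExp_congr_ae (step2.trans step3)
  have hg2sm : StronglyMeasurable[m'] (μ⟦t2 | m'⟧) := stronglyMeasurable_condExp
  have hint5 : Integrable ((μ⟦t2 | m'⟧) * f1) μ := by
    rw [show ((μ⟦t2 | m'⟧) * f1 : Ω → ℝ) = fun x => (μ⟦t2 | m'⟧) x * f1 x from rfl,
      indicator_mul_eq]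
    exact integrable_indicator_condexp ht1
  have hint1 : Integrable f1 μ := integrable_indicator_one ht1
  have step5 : μ[(μ⟦t2 | m'⟧) * f1|m'] =ᵐ[μ] (μ⟦t2 | m'⟧) * μ[f1|m'] :=
    condExp_mul_of_stronglyMeasurable_left hg2sm hint5 hint1
  have hcomm : (f1 * (μ⟦t2 | m'⟧) : Ω → ℝ) = (μ⟦t2 | m'⟧) * f1 := mul_comm _ _
  refine step1.trans (step4.trans ?_)
  rw [hcomm]
  refine step5.trans ?_
  rw [mul_comm]

lemma basic_case [IsProbabilityMeasure μ] {m' : MeasurableSpace Ω} (hm' : m' ≤ mΩ)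
    {s1 s2 t : Set Ω} (hs1 : MeasurableSet[m'] s1) (hs2m : MeasurableSet[mΩ] s2)
    (htm : MeasurableSet[mΩ] t)
    (hprod : (μ⟦s2 ∩ t | m'⟧) =ᵐ[μ] (μ⟦s2 | m'⟧) * (μ⟦t | m'⟧)) :
    ∫ x in s1 ∩ s2, (μ⟦t | m'⟧) x ∂μ
      = ∫ x in s1 ∩ s2, t.indicator (fun _ => (1:ℝ)) x ∂μ := by
  set g : Ω → ℝ := (μ⟦t | m'⟧) with hg
  set f2 : Ω → ℝ := s2.indicator (fun _ => (1:ℝ)) with hf2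
  have hint_gf2 : Integrable (fun x => g x * f2 x) μ := by
    rw [indicator_mul_eq]
    exact integrable_indicator' integrable_condExp hs2m
  have hint_f2 : Integrable f2 μ := integrable_indicator_one hs2m
  have e1 : ∫ x in s1 ∩ s2, g x ∂μ = ∫ x in s1, s2.indicator g x ∂μ :=
    (setIntegral_indicator' hs2m g).symm
  have e2 : ∫ x in s1, s2.indicator g x ∂μ = ∫ x in s1, (fun x => g x * f2 x) x ∂μ := by
    rw [indicator_mul_eq]
  have e3 : ∫ x in s1, (fun x => g x * f2 x) x ∂μ
      = ∫ x in s1, (μ[fun x => g x * f2 x|m']) x ∂μ :=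
    (setIntegral_condExp hm' hint_gf2 hs1).symm
  have pull : μ[fun x => g x * f2 x|m'] =ᵐ[μ] g * μ[f2|m'] := by
    have := condExp_mul_of_stronglyMeasurable_left (m := m') (μ := μ)
      (stronglyMeasurable_condExp (f := t.indicator (fun _ => (1:ℝ)))) hint_gf2 hint_f2
    exact this
  have prod2 : (g * μ[f2|m'] : Ω → ℝ) =ᵐ[μ] (μ⟦s2 ∩ t | m'⟧) := by
    refine (Filter.EventuallyEq.rfl.mul Filter.EventuallyEq.rfl).trans ?_
    calc (g * (μ⟦s2 | m'⟧) : Ω → ℝ) = (μ⟦s2 | m'⟧) * g := mul_comm _ _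
    _ =ᵐ[μ] (μ⟦s2 ∩ t | m'⟧) := hprod.symm
  have e4 : ∫ x in s1, (μ[fun x => g x * f2 x|m']) x ∂μ
      = ∫ x in s1, (μ⟦s2 ∩ t | m'⟧) x ∂μ :=
    setIntegral_congr_ae' (hm' _ hs1) (pull.trans prod2)
  have e5 : ∫ x in s1, (μ⟦s2 ∩ t | m'⟧) x ∂μ
      = ∫ x in s1, (s2 ∩ t).indicator (fun _ => (1:ℝ)) x ∂μ :=
    setIntegral_condExp hm' (integrable_indicator_one (hs2m.inter htm)) hs1
  have e6 : ∫ x in s1, (s2 ∩ t).indicator (fun _ => (1:ℝ)) x ∂μ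
      = ∫ x in s1 ∩ (s2 ∩ t), (1:ℝ) ∂μ :=
    setIntegral_indicator' (hs2m.inter htm) _
  have e7 : ∫ x in s1 ∩ s2, t.indicator (fun _ => (1:ℝ)) x ∂μ
      = ∫ x in (s1 ∩ s2) ∩ t, (1:ℝ) ∂μ :=
    setIntegral_indicator' htm _
  rw [e1, e2, e3, e4, e5, e6, e7, inter_assoc]

lemma drop_of_condIndep [StandardBorelSpace Ω] [IsProbabilityMeasure μ]
    {m' m₁ m₂ : MeasurableSpace Ω}
    (hm' : m' ≤ mΩ) (hm₁ : m₁ ≤ mΩ) (hm₂ : m₂ ≤ mΩ)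
    (h : CondIndep m' m₁ m₂ hm' μ) {t : Set Ω} (ht : MeasurableSet[m₂] t) :
    (μ⟦t | m' ⊔ m₁⟧) =ᵐ[μ] (μ⟦t | m'⟧) := by
  rw [condIndep_iff _ _ _ hm' hm₁ hm₂ _] at h
  have hsup : m' ⊔ m₁ ≤ mΩ := sup_le hm' hm₁
  have htm : MeasurableSet[mΩ] t := hm₂ _ ht
  have hf_int : Integrable (t.indicator fun _ => (1:ℝ)) μ := integrable_indicator_one htm
  have key : ∀ s : Set Ω, MeasurableSet[m' ⊔ m₁] s →
      ∫ x in s, (μ⟦t | m'⟧) x ∂μ = ∫ x in s, t.indicator (fun _ => (1:ℝ)) x ∂μ := by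
    intro s hs
    refine MeasurableSpace.induction_on_inter (m := m' ⊔ m₁)
      (C := fun u _ => ∫ x in u, (μ⟦t | m'⟧) x ∂μ
        = ∫ x in u, t.indicator (fun _ => (1:ℝ)) x ∂μ)
      (sup_eq_generateFrom_inter m' m₁) (isPiSystem_inter m' m₁) ?_ ?_ ?_ ?_ s hs
    · simp
    · rintro u ⟨s1, s2, hs1, hs2, rfl⟩
      exact basic_case hm' hs1 (hm₁ _ hs2) htm (h s2 t hs2 ht)
    · intro u hu h_eq
      have h1 := integral_add_compl' (hsup _ hu)
        (integrable_condExp (m := m') (f := t.indicator fun _ => (1:ℝ)) (μ := μ))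
      have h2 := integral_add_compl' (hsup _ hu) hf_int
      have h3 : ∫ x, (μ⟦t | m'⟧) x ∂μ = ∫ x, t.indicator (fun _ => (1:ℝ)) x ∂μ :=
        integral_condExp hm' (μ := μ) (f := t.indicator fun _ => (1:ℝ))
      linarith
    · intro g hdisj hmeas heq
      have hmeas' : ∀ i, MeasurableSet[mΩ] (g i) := fun i => hsup _ (hmeas i)
      exact (integral_iUnion' hmeas' hdisj
          (integrable_condExp (μ := μ) (m := m') (f := t.indicator fun _ => (1:ℝ)))).trans
        ((tsum_congr heq).trans (integral_iUnion' hmeas' hdisj hf_int).symm)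
  refine (ae_eq_condExp_of_forall_setIntegral_eq hsup hf_int ?_ ?_ ?_).symm
  · exact fun s _ _ => integrableOn_condexp
  · exact fun s hs _ => key s hs
  · exact (stronglyMeasurable_condExp.mono (le_sup_left : m' ≤ m' ⊔ m₁)).aestronglyMeasurable

section Graphoid
variable [StandardBorelSpace Ω] [IsProbabilityMeasure μ]

lemma condIndep_weaken {m' mA m₁ m₁' m₂ m₂' : MeasurableSpace Ω}
    (hm' : m' ≤ mΩ) (hmA : mA ≤ mΩ) (hm₁ : m₁ ≤ mΩ) (hm₁' : m₁' ≤ mΩ) (hm₂ : m₂ ≤ mΩ)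
    (h2' : m₂' ≤ m₂) (h'A : m' ≤ mA) (hA : mA ≤ m' ⊔ m₁) (hB : mA ⊔ m₁' ≤ m' ⊔ m₁)
    (h : CondIndep m' m₁ m₂ hm' μ) :
    CondIndep mA m₁' m₂' hmA μ := by
  apply condIndep_of_drop hmA hm₁' (h2'.trans hm₂)
  intro t ht
  have h0 := drop_of_condIndep hm' hm₁ hm₂ h (h2' _ ht)
  have hsup : m' ⊔ m₁ ≤ mΩ := sup_le hm' hm₁
  have h1 : (μ⟦t | mA⟧) =ᵐ[μ] (μ⟦t | m'⟧) := drop_mono h'A hA hsup h0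
  have h2 : (μ⟦t | mA ⊔ m₁'⟧) =ᵐ[μ] (μ⟦t | m'⟧) :=
    drop_mono (h'A.trans le_sup_left) hB hsup h0
  exact h2.trans h1.symm

lemma condIndep_contraction {m' m₁ m₁' m₂ : MeasurableSpace Ω}
    (hm' : m' ≤ mΩ) (hm₁ : m₁ ≤ mΩ) (hm₁' : m₁' ≤ mΩ) (hm₂ : m₂ ≤ mΩ)
    (h1 : CondIndep m' m₁ m₂ hm' μ)
    (h2 : CondIndep (m' ⊔ m₁) m₁' m₂ (sup_le hm' hm₁) μ) :
    CondIndep m' (m₁ ⊔ m₁') m₂ hm' μ := by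
  apply condIndep_of_drop hm' (sup_le hm₁ hm₁') hm₂
  intro t ht
  have e1 := drop_of_condIndep hm' hm₁ hm₂ h1 ht
  have e2 := drop_of_condIndep (sup_le hm' hm₁) hm₁' hm₂ h2 ht
  have e : m' ⊔ (m₁ ⊔ m₁') = (m' ⊔ m₁) ⊔ m₁' := (sup_assoc m' m₁ m₁').symm
  rw [e]
  exact e2.trans e1

end Graphoid

lemma condIndep_congr [StandardBorelSpace Ω] [IsFiniteMeasure μ]
    {m'1 m'2 m₁ m₂ m₃ m₄ : MeasurableSpace Ω}
    {h1 : m'1 ≤ mΩ} {h2 : m'2 ≤ mΩ}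
    (e' : m'1 = m'2) (e1 : m₁ = m₃) (e2 : m₂ = m₄)
    (h : CondIndep m'1 m₁ m₂ h1 μ) : CondIndep m'2 m₃ m₄ h2 μ := by
  subst e'; subst e1; subst e2; exact h

lemma comap_pi_eq {ι : Type} {β : ι → Type} [∀ i, MeasurableSpace (β i)] (f : ∀ i, Ω → β i) :
    MeasurableSpace.comap (fun ω i => f i ω) MeasurableSpace.pi
      = ⨆ i, MeasurableSpace.comap (f i) inferInstance := by
  rw [MeasurableSpace.pi, MeasurableSpace.comap_iSup]
  refine iSup_congr fun i => ?_
  rw [MeasurableSpace.comap_comp]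
  rfl

lemma comap_prod_eq {β γ : Type} [mβ : MeasurableSpace β] [mγ : MeasurableSpace γ]
    (f : Ω → β) (g : Ω → γ) :
    MeasurableSpace.comap (fun ω => (f ω, g ω)) inferInstance
      = MeasurableSpace.comap f mβ ⊔ MeasurableSpace.comap g mγ := by
  rw [show (inferInstance : MeasurableSpace (β × γ))
      = mβ.comap Prod.fst ⊔ mγ.comap Prod.snd from rfl,
    MeasurableSpace.comap_sup, MeasurableSpace.comap_comp, MeasurableSpace.comap_comp]
  rfl

/-! ### index sups -/

variable {n : ℕ}

def supLE (A : Fin (n + 1) → MeasurableSpace Ω) (m : ℕ) : MeasurableSpace Ω :=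
  ⨆ j : Fin (n + 1), ⨆ _ : (j : ℕ) ≤ m, A j

def supLT (B : Fin (n + 1) → MeasurableSpace Ω) (m : ℕ) : MeasurableSpace Ω :=
  ⨆ j : Fin (n + 1), ⨆ _ : (j : ℕ) < m, B j

def supGT (A : Fin (n + 1) → MeasurableSpace Ω) (m : ℕ) : MeasurableSpace Ω :=
  ⨆ j : Fin (n + 1), ⨆ _ : m < (j : ℕ), A j

variable {A B : Fin (n + 1) → MeasurableSpace Ω}

lemma supLE_le (hA : ∀ j, A j ≤ mΩ) (m : ℕ) : supLE A m ≤ mΩ :=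
  iSup₂_le fun j _ => hA j

lemma supLT_le (hB : ∀ j, B j ≤ mΩ) (m : ℕ) : supLT B m ≤ mΩ :=
  iSup₂_le fun j _ => hB j

lemma supGT_le (hA : ∀ j, A j ≤ mΩ) (m : ℕ) : supGT A m ≤ mΩ :=
  iSup₂_le fun j _ => hA j

lemma supLE_mono {m m' : ℕ} (h : m ≤ m') : supLE A m ≤ supLE A m' :=
  iSup₂_le fun j hj => le_iSup₂_of_le j (hj.trans h) le_rfl

lemma supLT_mono {m m' : ℕ} (h : m ≤ m') : supLT B m ≤ supLT B m' :=
  iSup₂_le fun j hj => le_iSup₂_of_le j (lt_of_lt_of_le hj h) le_rfl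

lemma supGT_anti {m m' : ℕ} (h : m ≤ m') : supGT A m' ≤ supGT A m :=
  iSup₂_le fun j hj => le_iSup₂_of_le j (lt_of_le_of_lt h hj) le_rfl

lemma supLT_zero : supLT B 0 = ⊥ :=
  le_antisymm (iSup₂_le fun _ hj => absurd hj (by omega)) bot_le

lemma supGT_top {m : ℕ} (h : n ≤ m) : supGT A m = ⊥ :=
  le_antisymm (iSup₂_le fun j hj => absurd hj (by have := j.isLt; omega)) bot_le

lemma supLE_succ (m : ℕ) (h : m + 1 ≤ n) :
    supLE A (m + 1) = supLE A m ⊔ A ⟨m + 1, by omega⟩ := by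
  refine le_antisymm (iSup₂_le fun j hj => ?_)
    (sup_le (supLE_mono (Nat.le_succ m)) (le_iSup₂_of_le ⟨m + 1, by omega⟩ le_rfl le_rfl))
  by_cases hj' : (j : ℕ) ≤ m
  · exact le_trans (le_iSup₂_of_le j hj' le_rfl) le_sup_left
  · have hj2 : j = ⟨m + 1, by omega⟩ := Fin.ext (by simp; omega)
    rw [hj2]
    exact le_sup_right

lemma supLT_succ (m : ℕ) (h : m ≤ n) :
    supLT B (m + 1) = supLT B m ⊔ B ⟨m, by omega⟩ := by
  refine le_antisymm (iSup₂_le fun j hj => ?_)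
    (sup_le (supLT_mono (Nat.le_succ m)) (le_iSup₂_of_le ⟨m, by omega⟩ (Nat.lt_succ_self m) le_rfl))
  by_cases hj' : (j : ℕ) < m
  · exact le_trans (le_iSup₂_of_le j hj' le_rfl) le_sup_left
  · have hj2 : j = ⟨m, by omega⟩ := Fin.ext (by simp; omega)
    rw [hj2]
    exact le_sup_right

lemma supGT_succ (m : ℕ) (h : m + 1 ≤ n) :
    supGT A m = A ⟨m + 1, by omega⟩ ⊔ supGT A (m + 1) := by
  refine le_antisymm (iSup₂_le fun j hj => ?_)
    (sup_le (le_iSup₂_of_le ⟨m + 1, by omega⟩ (Nat.lt_succ_self m) le_rfl)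
      (supGT_anti (Nat.le_succ m)))
  by_cases hj' : m + 1 < (j : ℕ)
  · exact le_trans (le_iSup₂_of_le j hj' le_rfl) le_sup_right
  · have hj2 : j = ⟨m + 1, by omega⟩ := Fin.ext (by simp; omega)
    rw [hj2]
    exact le_sup_left

lemma le_supGT {m : ℕ} (h : m + 1 ≤ n) : A ⟨m + 1, by omega⟩ ≤ supGT A m :=
  le_iSup₂_of_le ⟨m + 1, by omega⟩ (Nat.lt_succ_self m) le_rfl

lemma le_supLT {m : ℕ} (h : m ≤ n) : B ⟨m, by omega⟩ ≤ supLT B (m + 1) :=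
  le_iSup₂_of_le ⟨m, by omega⟩ (Nat.lt_succ_self m) le_rfl

/-! ### main abstract theorem -/

theorem main_abstract [StandardBorelSpace Ω] [IsProbabilityMeasure μ]
    (A B : Fin (n + 1) → MeasurableSpace Ω)
    (hA : ∀ j, A j ≤ mΩ) (hB : ∀ j, B j ≤ mΩ) :
    (∀ m : ℕ, (hm : m < n) →
        CondIndep (supLE A m ⊔ supLT B m) (B ⟨m, by omega⟩) (supGT A m)
          (sup_le (supLE_le hA m) (supLT_le hB m)) μ)
      ↔ (∀ m : ℕ, (hm : m < n) →
        CondIndep (supLE A m) (supLT B (m + 1)) (A ⟨m + 1, by omega⟩)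
          (supLE_le hA m) μ) := by
  have hXL := supLE_le hA
  have hYL := supLT_le hB
  have hXG := supGT_le hA
  constructor
  · intro hi
    have S : ∀ m : ℕ, (hm : m < n) →
        CondIndep (supLE A m) (supLT B (m + 1)) (supGT A m) (supLE_le hA m) μ := by
      intro m
      induction m with
      | zero =>
        intro h0
        refine condIndep_congr ?_ ?_ rfl (hi 0 h0)
        · rw [supLT_zero, sup_bot_eq]
        · rw [supLT_succ 0 (by omega), supLT_zero, bot_sup_eq]
      | succ m ih =>
        intro hsucc
        have hm : m < n := by omega
        have Sm := ih hm
        have hAsucc : A ⟨m + 1, by omega⟩ ≤ supGT A m := le_supGT (by omega)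
        have hXLsub : supLE A (m + 1) ≤ supLE A m ⊔ supGT A m := by
          rw [supLE_succ m (by omega)]
          exact sup_le le_sup_left (hAsucc.trans le_sup_right)
        have T : CondIndep (supLE A (m + 1)) (supGT A (m + 1)) (supLT B (m + 1))
            (supLE_le hA (m + 1)) μ := by
          refine condIndep_weaken (hXL m) (hXL (m + 1)) (hXG m) (hXG (m + 1))
            (hYL (m + 1)) le_rfl (supLE_mono (Nat.le_succ m)) hXLsub
            (sup_le hXLsub ((supGT_anti (Nat.le_succ m)).trans le_sup_right)) Sm.symm
        have contr := condIndep_contraction (hXL (m + 1)) (hYL (m + 1)) (hB _)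
          (hXG (m + 1)) T.symm (hi (m + 1) hsucc)
        refine condIndep_congr rfl ?_ rfl contr
        exact (supLT_succ (m + 1) (by omega)).symm
    intro m hm
    refine condIndep_weaken (hXL m) (hXL m) (hYL (m + 1)) (hYL (m + 1)) (hXG m)
      (le_supGT (by omega)) le_rfl le_sup_left le_rfl (S m hm)
  · intro hii
    have S : ∀ k : ℕ, k ≤ n →
        CondIndep (supLE A (n - k)) (supLT B (n - k + 1)) (supGT A (n - k))
          (supLE_le hA (n - k)) μ := by
      intro k
      induction k with
      | zero =>
        intro _
        exact condIndep_congr (h1 := hXL (n - 0)) rfl rfl (supGT_top (by omega)).symm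
          (condIndep_bot_right (hm' := hXL (n - 0)) _)
      | succ k ih =>
        intro hk
        have hkn : k ≤ n := by omega
        have hj : n - (k + 1) + 1 = n - k := by omega
        have hjn : n - (k + 1) < n := by omega
        have Sj1 : CondIndep (supLE A (n - (k + 1) + 1)) (supLT B (n - (k + 1) + 1 + 1))
            (supGT A (n - (k + 1) + 1)) (supLE_le hA (n - (k + 1) + 1)) μ :=
          condIndep_congr (by rw [hj]) (by rw [hj]) (by rw [hj]) (ih hkn)
        have h2c : CondIndep (supLE A (n - (k + 1)) ⊔ A ⟨n - (k + 1) + 1, by omega⟩)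
            (supGT A (n - (k + 1) + 1)) (supLT B (n - (k + 1) + 1))
            (sup_le (supLE_le hA (n - (k + 1))) (hA _)) μ := by
          refine condIndep_congr (h1 := hXL (n - (k + 1) + 1)) (supLE_succ (n - (k + 1)) (by omega)) rfl rfl ?_
          refine condIndep_weaken (hXL (n - (k + 1) + 1)) (hXL (n - (k + 1) + 1))
            (hXG (n - (k + 1) + 1)) (hXG (n - (k + 1) + 1)) (hYL (n - (k + 1) + 1 + 1))
            (supLT_mono (by omega)) le_rfl le_sup_left le_rfl Sj1.symm
        have h1c : CondIndep (supLE A (n - (k + 1))) (A ⟨n - (k + 1) + 1, by omega⟩)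
            (supLT B (n - (k + 1) + 1)) (supLE_le hA (n - (k + 1))) μ :=
          (hii (n - (k + 1)) hjn).symm
        have contr := condIndep_contraction (hXL (n - (k + 1))) (hA _)
          (hXG (n - (k + 1) + 1)) (hYL (n - (k + 1) + 1)) h1c h2c
        have efin : A ⟨n - (k + 1) + 1, by omega⟩ ⊔ supGT A (n - (k + 1) + 1)
            = supGT A (n - (k + 1)) := (supGT_succ (n - (k + 1)) (by omega)).symm
        exact (condIndep_congr rfl efin rfl contr).symm
    intro m hm
    have hk : n - (n - m) = m := by omega
    have Sm' : CondIndep (supLE A m) (supLT B (m + 1)) (supGT A m) (supLE_le hA m) μ :=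
      condIndep_congr (by rw [hk]) (by rw [hk]) (by rw [hk]) (S (n - m) (by omega))
    refine condIndep_weaken (hXL m) (sup_le (hXL m) (hYL m)) (hYL (m + 1)) (hB _) (hXG m)
      le_rfl le_sup_left ?_ ?_ Sm'
    · exact sup_le le_sup_left ((supLT_mono (by omega)).trans le_sup_right)
    · refine sup_le (sup_le le_sup_left ((supLT_mono (by omega)).trans le_sup_right)) ?_
      exact (le_supLT (by omega)).trans le_sup_right

end CondIndepAux

/-- For random variables `(X^n, Y^n)` with values in Polish product spaces under
a probability measure `P`, the following families of conditional independence conditions are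
equivalent: (i) for each `i = 0, …, n-1`, `Y_i` is conditionally independent of
`(X_{i+1}, …, X_n)` given `(X^i, Y^{i-1})`; (ii) for each `i = 0, …, n-1`, `Y^i` is
conditionally independent of `X_{i+1}` given `X^i`. -/
theorem condIndep_future_iff_condIndep_next
    {n : ℕ} (X Y : ℕ → Type)
    [∀ i, MeasurableSpace (X i)] [∀ i, TopologicalSpace (X i)]
    [∀ i, PolishSpace (X i)] [∀ i, BorelSpace (X i)]
    [∀ i, MeasurableSpace (Y i)] [∀ i, TopologicalSpace (Y i)]
    [∀ i, PolishSpace (Y i)] [∀ i, BorelSpace (Y i)]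
    (Ω : Type) [MeasurableSpace Ω] [StandardBorelSpace Ω] [Nonempty Ω]
    (P : Measure Ω) [IsProbabilityMeasure P]
    (Xp : ∀ i : Fin (n + 1), Ω → X i) (Yp : ∀ i : Fin (n + 1), Ω → Y i)
    (hXp : ∀ i, Measurable (Xp i)) (hYp : ∀ i, Measurable (Yp i)) :
    (∀ i : Fin (n + 1), (h : (i : ℕ) < n) →
        CondIndepFun
          (MeasurableSpace.comap
            (fun ω : Ω =>
              ((fun j : {k : Fin (n + 1) // k ≤ i} => Xp j ω),
               (fun j : {k : Fin (n + 1) // k < i} => Yp j ω)))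
            inferInstance)
          (Measurable.comap_le (by fun_prop (disch := aesop)))
          (fun ω => Yp i ω)
          (fun ω => fun j : {k : Fin (n + 1) // i < k} => Xp j ω)
          P)
    ↔ (∀ i : Fin (n + 1), (h : (i : ℕ) < n) →
        CondIndepFun
          (MeasurableSpace.comap
            (fun ω : Ω => fun j : {k : Fin (n + 1) // k ≤ i} => Xp j ω)
            inferInstance)
          (Measurable.comap_le (by fun_prop (disch := aesop)))
          (fun ω => fun j : {k : Fin (n + 1) // k ≤ i} => Yp j ω)
          (fun ω => Xp ⟨(i : ℕ) + 1, by omega⟩ ω)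
          P) := by
  set A : Fin (n + 1) → MeasurableSpace Ω :=
    fun j => MeasurableSpace.comap (Xp j) inferInstance with hAdef
  set Bm : Fin (n + 1) → MeasurableSpace Ω :=
    fun j => MeasurableSpace.comap (Yp j) inferInstance with hBdef
  have hA : ∀ j, A j ≤ ‹MeasurableSpace Ω› := fun j => (hXp j).comap_le
  have hB : ∀ j, Bm j ≤ ‹MeasurableSpace Ω› := fun j => (hYp j).comap_le
  have eXle : ∀ i : Fin (n + 1),
      MeasurableSpace.comap (fun ω : Ω => fun j : {k : Fin (n + 1) // k ≤ i} => Xp j ω)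
        inferInstance = CondIndepAux.supLE A (i : ℕ) := by
    intro i
    rw [CondIndepAux.comap_pi_eq, iSup_subtype]
    refine le_antisymm (iSup₂_le fun j hj => le_iSup₂_of_le j hj le_rfl)
      (iSup₂_le fun j hj => le_iSup₂_of_le j hj le_rfl)
  have eYlt : ∀ i : Fin (n + 1),
      MeasurableSpace.comap (fun ω : Ω => fun j : {k : Fin (n + 1) // k < i} => Yp j ω)
        inferInstance = CondIndepAux.supLT Bm (i : ℕ) := by
    intro i
    rw [CondIndepAux.comap_pi_eq, iSup_subtype]
    refine le_antisymm (iSup₂_le fun j hj => le_iSup₂_of_le j hj le_rfl)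
      (iSup₂_le fun j hj => le_iSup₂_of_le j hj le_rfl)
  have eXgt : ∀ i : Fin (n + 1),
      MeasurableSpace.comap (fun ω : Ω => fun j : {k : Fin (n + 1) // i < k} => Xp j ω)
        inferInstance = CondIndepAux.supGT A (i : ℕ) := by
    intro i
    rw [CondIndepAux.comap_pi_eq, iSup_subtype]
    refine le_antisymm (iSup₂_le fun j hj => le_iSup₂_of_le j hj le_rfl)
      (iSup₂_le fun j hj => le_iSup₂_of_le j hj le_rfl)
  have eYle : ∀ i : Fin (n + 1),
      MeasurableSpace.comap (fun ω : Ω => fun j : {k : Fin (n + 1) // k ≤ i} => Yp j ω)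
        inferInstance = CondIndepAux.supLT Bm ((i : ℕ) + 1) := by
    intro i
    rw [CondIndepAux.comap_pi_eq, iSup_subtype]
    refine le_antisymm (iSup₂_le fun j hj => ?_) (iSup₂_le fun j hj => ?_)
    · have hj' : (j : ℕ) ≤ (i : ℕ) := hj
      exact le_iSup₂_of_le j (by omega) le_rfl
    · have hj' : (j : ℕ) < (i : ℕ) + 1 := hj
      exact le_iSup₂_of_le j (show (j : ℕ) ≤ (i : ℕ) by omega) le_rfl
  have ePair : ∀ i : Fin (n + 1),
      MeasurableSpace.comap
          (fun ω : Ω =>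
            ((fun j : {k : Fin (n + 1) // k ≤ i} => Xp j ω),
             (fun j : {k : Fin (n + 1) // k < i} => Yp j ω)))
          inferInstance
        = CondIndepAux.supLE A (i : ℕ) ⊔ CondIndepAux.supLT Bm (i : ℕ) := by
    intro i
    rw [CondIndepAux.comap_prod_eq, eXle i, eYlt i]
  refine Iff.trans ?_ (Iff.trans (CondIndepAux.main_abstract (μ := P) A Bm hA hB) ?_)
  · constructor
    · intro H m hm
      have h0 := H ⟨m, by omega⟩ hm
      rw [condIndepFun_iff_condIndep (μ := P)] at h0
      exact CondIndepAux.condIndep_congr (ePair ⟨m, by omega⟩) rfl (eXgt ⟨m, by omega⟩) h0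
    · intro H i h
      rw [condIndepFun_iff_condIndep (μ := P)]
      exact CondIndepAux.condIndep_congr (ePair i).symm rfl (eXgt i).symm (H (i : ℕ) h)
  · constructor
    · intro H i h
      rw [condIndepFun_iff_condIndep (μ := P)]
      exact CondIndepAux.condIndep_congr (eXle i).symm (eYle i).symm rfl (H (i : ℕ) h)
    · intro H m hm
      have h0 := H ⟨m, by omega⟩ hm
      rw [condIndepFun_iff_condIndep (μ := P)] at h0
      exact CondIndepAux.condIndep_congr (eXle ⟨m, by omega⟩) (eYle ⟨m, by omega⟩) rfl h0
end
end

section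
/- The set Q_ad = L^w_∞(μ, Π_rba(Y_{0,n})) of weak*-measurable, μ-essentially bounded functions on X_{0,n} with values in the regular bounded finitely additive probability measures on Y_{0,n} is compact in the weak* topology of L^w_∞(μ, M_rba(Y_{0,n})). -/
open MeasureTheory ProbabilityTheory BoundedContinuousFunction
open scoped ENNReal

noncomputable section

/-- The source product space `X_{0,n}`. -/
abbrev Xn (X : ℕ → Type) (n : ℕ) := ∀ j : Fin (n + 1), X j

/-- The reconstruction product space `Y_{0,n}`. -/
abbrev Yn (Y : ℕ → Type) (n : ℕ) := ∀ j : Fin (n + 1), Y j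

/-- The Banach space `L_1(μ, BC(Y_{0,n}))` of `μ`-integrable functions with values in the
Banach space `BC(Y_{0,n})` of bounded continuous real-valued functions on `Y_{0,n}`. -/
abbrev L1BC (X Y : ℕ → Type) (n : ℕ) [∀ i, MeasurableSpace (X i)]
    [∀ i, TopologicalSpace (Y i)] (μ : Measure (Xn X n)) :=
  Lp (E := Yn Y n →ᵇ ℝ) 1 μ

/-- `L^w_∞(μ, M_rba(Y_{0,n}))`: the topological dual of `L_1(μ, BC(Y_{0,n}))`, equipped with
the weak* topology (by the duality theorem for the "lifting", this dual is isometrically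
isomorphic to the space of weak*-measurable μ-essentially bounded `M_rba(Y_{0,n})`-valued
functions). -/
abbrev Lwinf (X Y : ℕ → Type) (n : ℕ) [∀ i, MeasurableSpace (X i)]
    [∀ i, TopologicalSpace (Y i)] (μ : Measure (Xn X n)) :=
  WeakDual ℝ (L1BC X Y n μ)

variable {n : ℕ} {X Y : ℕ → Type}
  [∀ i, MeasurableSpace (X i)] [∀ i, TopologicalSpace (X i)]
  [∀ i, PolishSpace (X i)] [∀ i, BorelSpace (X i)]
  [∀ i, MeasurableSpace (Y i)] [∀ i, TopologicalSpace (Y i)]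
  [∀ i, PolishSpace (Y i)] [∀ i, BorelSpace (Y i)]
  (μ : Measure (Xn X n)) [IsProbabilityMeasure μ]

/-- `Q_ad = L^w_∞(μ, Π_rba(Y_{0,n}))`: the elements of the dual corresponding to families of
regular bounded finitely additive *probability* measures on `Y_{0,n}`, i.e. the positive
elements of total mass one. -/
def Qad : Set (Lwinf X Y n μ) :=
  {Q | (∀ φ : L1BC X Y n μ, (∀ᵐ x ∂μ, ∀ y, 0 ≤ φ x y) → 0 ≤ Q φ) ∧
       (∀ (φ : L1BC X Y n μ) (g : Xn X n → ℝ),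
         (∀ᵐ x ∂μ, φ x = BoundedContinuousFunction.const (Yn Y n) (g x)) →
           Q φ = ∫ x, g x ∂μ)}

section Aux

open MeasureTheory BoundedContinuousFunction

variable {α : Type*} [TopologicalSpace α]

lemma lipschitz_bcfConst : LipschitzWith 1 (BoundedContinuousFunction.const α (β := ℝ)) := by
  intro a b
  rw [edist_dist, edist_dist, ENNReal.coe_one, one_mul]
  apply ENNReal.ofReal_le_ofReal
  rw [BoundedContinuousFunction.dist_le dist_nonneg]
  intro x
  simp [BoundedContinuousFunction.const_apply']

end Aux

open MeasureTheory ProbabilityTheory BoundedContinuousFunction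
open scoped ENNReal

/-- The set `Q_ad = L^w_∞(μ, Π_rba(Y_{0,n}))` of (equivalence classes of)
weak*-measurable μ-essentially bounded functions with values in the regular bounded finitely
additive probability measures on `Y_{0,n}` is compact in the weak* topology of
`L^w_∞(μ, M_rba(Y_{0,n}))`. -/
theorem Qad_weakStar_compact : IsCompact (Qad μ : Set (Lwinf X Y n μ)) := by
  cases isEmpty_or_nonempty (Yn Y n) with
  | inl h =>
    convert isCompact_empty
    rw [Set.eq_empty_iff_forall_notMem]
    rintro Q ⟨_, h2⟩
    have e0 : (0 : L1BC X Y n μ) = (0 : L1BC X Y n μ) := rfl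
    have hz : ∀ g : Xn X n → ℝ, Q 0 = ∫ x, g x ∂μ := by
      intro g
      refine h2 0 g ?_
      filter_upwards [Lp.coeFn_zero (E := Yn Y n →ᵇ ℝ) 1 μ] with x hx
      rw [hx]
      haveI : Subsingleton (Yn Y n →ᵇ ℝ) :=
        ⟨fun f g => by ext y; exact h.elim y⟩
      exact Subsingleton.elim _ _
    have h0 := hz (fun _ => 0)
    have h1 := hz (fun _ => 1)
    rw [integral_const] at h0 h1
    simp only [measure_univ, probReal_univ, ENNReal.toReal_one, smul_eq_mul, mul_zero, mul_one,
      one_smul, zero_smul, smul_zero] at h0 h1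
    exact zero_ne_one (by rw [← h0, ← h1])
  | inr h =>
    apply IsCompact.of_isClosed_subset
      (WeakDual.isCompact_closedBall (𝕜 := ℝ) 0 1)
    · -- closedness of Qad
      have hc1 : IsClosed {Q : Lwinf X Y n μ |
          ∀ φ : L1BC X Y n μ, (∀ᵐ x ∂μ, ∀ y, 0 ≤ φ x y) → 0 ≤ Q φ} := by
        simp only [Set.setOf_forall]
        refine isClosed_iInter fun φ => isClosed_iInter fun _ => ?_
        exact isClosed_le continuous_const (WeakDual.eval_continuous φ)
      have hc2 : IsClosed {Q : Lwinf X Y n μ |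
          ∀ (φ : L1BC X Y n μ) (g : Xn X n → ℝ),
            (∀ᵐ x ∂μ, φ x = BoundedContinuousFunction.const (Yn Y n) (g x)) →
              Q φ = ∫ x, g x ∂μ} := by
        simp only [Set.setOf_forall]
        refine isClosed_iInter fun φ => isClosed_iInter fun g => isClosed_iInter fun _ => ?_
        exact isClosed_eq (WeakDual.eval_continuous φ) continuous_const
      exact hc1.inter hc2
    · -- Qad ⊆ closed unit ball
      rintro Q ⟨h1, h2⟩
      simp only [Set.mem_preimage, Metric.mem_closedBall, dist_zero_right]
      refine ContinuousLinearMap.opNorm_le_bound _ zero_le_one fun φ => ?_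
      rw [one_mul]
      -- the constant majorant ψ
      have hmemnorm : MemLp (fun x => ‖(φ : Xn X n → Yn Y n →ᵇ ℝ) x‖) 1 μ :=
        (Lp.memLp φ).norm
      have hmeas : AEStronglyMeasurable
          (fun x => BoundedContinuousFunction.const (Yn Y n) ‖(φ : Xn X n → Yn Y n →ᵇ ℝ) x‖) μ :=
        lipschitz_bcfConst.continuous.comp_aestronglyMeasurable hmemnorm.1
      have hmem : MemLp
          (fun x => BoundedContinuousFunction.const (Yn Y n) ‖(φ : Xn X n → Yn Y n →ᵇ ℝ) x‖) 1 μ :=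
        MemLp.of_le hmemnorm hmeas
          (Filter.Eventually.of_forall fun x => by
            simpa using BoundedContinuousFunction.norm_const_le _)
      set ψ : L1BC X Y n μ := hmem.toLp _ with hψ
      have hψcoe := hmem.coeFn_toLp
      have hQψ : Q ψ = ∫ x, ‖(φ : Xn X n → Yn Y n →ᵇ ℝ) x‖ ∂μ := h2 ψ _ hψcoe
      have key : ∀ φ' : L1BC X Y n μ,
          (∀ᵐ x ∂μ, ∀ y, (φ' : Xn X n → Yn Y n →ᵇ ℝ) x y ≤
            ‖(φ : Xn X n → Yn Y n →ᵇ ℝ) x‖) → Q φ' ≤ Q ψ := by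
        intro φ' hle
        have := h1 (ψ - φ') ?_
        · have hsub : Q (ψ - φ') = Q ψ - Q φ' := map_sub Q ψ φ'
          linarith [hsub ▸ this]
        · filter_upwards [Lp.coeFn_sub ψ φ', hψcoe, hle] with x hx1 hx2 hx3 y
          rw [hx1]
          simp only [Pi.sub_apply, BoundedContinuousFunction.coe_sub, hψ, hx2]
          simpa using hx3 y
      have hub : Q φ ≤ Q ψ := key φ <| Filter.Eventually.of_forall fun x y => by
        have := BoundedContinuousFunction.norm_coe_le_norm
          ((φ : Xn X n → Yn Y n →ᵇ ℝ) x) y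
        rw [Real.norm_eq_abs] at this
        exact (le_abs_self _).trans this
      have hlb : Q (-φ) ≤ Q ψ := key (-φ) ?_
      · show ‖Q φ‖ ≤ ‖φ‖
        have : ‖φ‖ = ∫ x, ‖(φ : Xn X n → Yn Y n →ᵇ ℝ) x‖ ∂μ := L1.norm_eq_integral_norm φ
        rw [this, ← hQψ]
        rw [Real.norm_eq_abs, abs_le]
        constructor
        · have : Q (-φ) = -Q φ := map_neg Q φ
          linarith [this ▸ hlb]
        · exact hub
      · filter_upwards [Lp.coeFn_neg φ] with x hx y
        rw [hx]
        simp only [Pi.neg_apply, BoundedContinuousFunction.coe_neg]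
        have := BoundedContinuousFunction.norm_coe_le_norm
          ((φ : Xn X n → Yn Y n →ᵇ ℝ) x) y
        rw [Real.norm_eq_abs] at this
        exact (neg_le_abs _).trans this
end
end

section
/- Let d_{0,n} : X_{0,n} × Y_{0,n} → [0,∞) be measurable with d_{0,n} ∈ L_1(μ, BC(Y_{0,n})), and for D ≥ 0 define Q_{0,n}(D) = { q ∈ Q_ad : ℓ_{d_{0,n}}(q) ≤ D }, where ℓ_{d_{0,n}}(q) = ∫_{X_{0,n}} ( ∫_{Y_{0,n}} d_{0,n}(x^n,y^n) q(dy^n; x^n) ) μ(dx^n). Then Q_{0,n}(D) is a weak*-bounded and weak*-closed subset of Q_ad. -/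
open MeasureTheory ProbabilityTheory BoundedContinuousFunction
open scoped ENNReal

noncomputable section

variable {n : ℕ} {X Y : ℕ → Type}
  [∀ i, MeasurableSpace (X i)] [∀ i, TopologicalSpace (X i)]
  [∀ i, PolishSpace (X i)] [∀ i, BorelSpace (X i)]
  [∀ i, MeasurableSpace (Y i)] [∀ i, TopologicalSpace (Y i)]
  [∀ i, PolishSpace (Y i)] [∀ i, BorelSpace (Y i)]
  (μ : Measure (Xn X n)) [IsProbabilityMeasure μ]

section Aux

variable {n : ℕ} {X Y : ℕ → Type}
  [∀ i, MeasurableSpace (X i)] [∀ i, TopologicalSpace (X i)]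
  [∀ i, PolishSpace (X i)] [∀ i, BorelSpace (X i)]
  [∀ i, MeasurableSpace (Y i)] [∀ i, TopologicalSpace (Y i)]
  [∀ i, PolishSpace (Y i)] [∀ i, BorelSpace (Y i)]

/-- The map `g ↦ const ‖g‖` on `BC(Y_{0,n})` is `1`-Lipschitz. -/
lemma constNorm_lipschitz :
    LipschitzWith 1 (fun g : Yn Y n →ᵇ ℝ => BoundedContinuousFunction.const (Yn Y n) ‖g‖) := by
  refine LipschitzWith.of_dist_le_mul fun g h => ?_
  rw [NNReal.coe_one, one_mul, dist_eq_norm, dist_eq_norm]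
  have hconst : BoundedContinuousFunction.const (Yn Y n) ‖g‖ -
      BoundedContinuousFunction.const (Yn Y n) ‖h‖ =
      BoundedContinuousFunction.const (Yn Y n) (‖g‖ - ‖h‖) := by
    ext y; simp
  rw [hconst]
  calc ‖BoundedContinuousFunction.const (Yn Y n) (‖g‖ - ‖h‖)‖
      ≤ ‖(‖g‖ - ‖h‖)‖ := BoundedContinuousFunction.norm_const_le _
    _ ≤ ‖g - h‖ := abs_norm_sub_norm_le g h

lemma constNorm_zero :
    (fun g : Yn Y n →ᵇ ℝ => BoundedContinuousFunction.const (Yn Y n) ‖g‖) 0 = 0 := by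
  ext y; simp

/-- Any element of `Q_ad` applied to `φ` is bounded by `∫ ‖φ x‖ dμ`. -/
lemma Qad_apply_le (μ : Measure (Xn X n)) [IsProbabilityMeasure μ]
    (Q : Lwinf X Y n μ) (hQ : Q ∈ Qad μ) (φ : L1BC X Y n μ) :
    Q φ ≤ ∫ x, ‖φ x‖ ∂μ := by
  set ψ : L1BC X Y n μ := (constNorm_lipschitz (n := n) (Y := Y)).compLp constNorm_zero φ with hψ
  have hψ_ae : ∀ᵐ x ∂μ, ψ x = BoundedContinuousFunction.const (Yn Y n) ‖φ x‖ :=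
    LipschitzWith.coeFn_compLp _ _ _
  have hQψ : Q ψ = ∫ x, ‖φ x‖ ∂μ := hQ.2 ψ (fun x => ‖φ x‖) hψ_ae
  have hpos : 0 ≤ Q (ψ - φ) := by
    refine hQ.1 (ψ - φ) ?_
    filter_upwards [Lp.coeFn_sub ψ φ, hψ_ae] with x hx hx' y
    rw [hx]
    simp only [Pi.sub_apply, BoundedContinuousFunction.coe_sub, hx',
      BoundedContinuousFunction.const_apply]
    have := BoundedContinuousFunction.norm_coe_le_norm (φ x) y
    have h2 : φ x y ≤ |φ x y| := le_abs_self _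
    simp only [Real.norm_eq_abs] at this
    linarith
  rw [map_sub] at hpos
  linarith

/-- Two-sided bound for elements of `Q_ad`. -/
lemma Qad_abs_apply_le (μ : Measure (Xn X n)) [IsProbabilityMeasure μ]
    (Q : Lwinf X Y n μ) (hQ : Q ∈ Qad μ) (φ : L1BC X Y n μ) :
    |Q φ| ≤ ∫ x, ‖φ x‖ ∂μ := by
  refine abs_le.2 ⟨?_, Qad_apply_le μ Q hQ φ⟩
  have h := Qad_apply_le μ Q hQ (-φ)
  have hint : ∫ x, ‖(-φ : L1BC X Y n μ) x‖ ∂μ = ∫ x, ‖φ x‖ ∂μ := by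
    refine integral_congr_ae ?_
    filter_upwards [Lp.coeFn_neg φ] with x hx
    rw [hx]; simp
  rw [map_neg, hint] at h
  linarith

end Aux

/-- For a distortion function `d_{0,n} ∈ L_1(μ, BC(Y_{0,n}))` with values in
`[0, ∞)`, the constraint set `Q_{0,n}(D) = { q ∈ Q_ad : ℓ_{d_{0,n}}(q) ≤ D }` is a
weak*-bounded and weak*-closed subset of `Q_ad`. -/

theorem constraint_set_weakStar_closed_bounded
    (d : L1BC X Y n μ) (hd : ∀ᵐ x ∂μ, ∀ y, 0 ≤ d x y) (D : ℝ) (hD : 0 ≤ D) :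
    Bornology.IsVonNBounded ℝ {Q : Lwinf X Y n μ | Q ∈ Qad μ ∧ Q d ≤ D} ∧
    IsClosed {Q : Lwinf X Y n μ | Q ∈ Qad μ ∧ Q d ≤ D} := by
  constructor
  · -- boundedness via the seminorm characterization of the weak* topology
    have hws := LinearMap.weakBilin_withSeminorms (topDualPairing ℝ (L1BC X Y n μ))
    refine hws.isVonNBounded_iff_seminorm_bounded.mpr ?_
    intro φ
    refine ⟨(∫ x, ‖φ x‖ ∂μ) + 1, ?_, ?_⟩
    · have : 0 ≤ ∫ x, ‖φ x‖ ∂μ := integral_nonneg fun x => norm_nonneg _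
      linarith
    · rintro Q ⟨hQ, -⟩
      have := Qad_abs_apply_le μ Q hQ φ
      change ‖(show Lwinf X Y n μ from Q) φ‖ < _
      rw [Real.norm_eq_abs]
      exact lt_of_le_of_lt this (lt_add_of_pos_right _ one_pos)
  · -- closedness: the set is an intersection of preimages of closed sets under evaluations
    have hset : {Q : Lwinf X Y n μ | Q ∈ Qad μ ∧ Q d ≤ D} =
        (⋂ φ ∈ {φ : L1BC X Y n μ | ∀ᵐ x ∂μ, ∀ y, 0 ≤ φ x y},
          {Q : Lwinf X Y n μ | 0 ≤ Q φ}) ∩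
        ((⋂ p ∈ {p : L1BC X Y n μ × (Xn X n → ℝ) |
            ∀ᵐ x ∂μ, p.1 x = BoundedContinuousFunction.const (Yn Y n) (p.2 x)},
          {Q : Lwinf X Y n μ | Q p.1 = ∫ x, p.2 x ∂μ}) ∩
        {Q : Lwinf X Y n μ | Q d ≤ D}) := by
      ext Q
      simp only [Set.mem_inter_iff, Set.mem_iInter, Set.mem_setOf_eq, Qad]
      constructor
      · rintro ⟨⟨h1, h2⟩, h3⟩
        exact ⟨fun φ hφ => h1 φ hφ, fun p hp => h2 p.1 p.2 hp, h3⟩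
      · rintro ⟨h1, h2, h3⟩
        exact ⟨⟨fun φ hφ => h1 φ hφ, fun φ g hg => h2 (φ, g) hg⟩, h3⟩
    rw [hset]
    refine IsClosed.inter ?_ (IsClosed.inter ?_ ?_)
    · refine isClosed_biInter fun φ _ => ?_
      exact isClosed_le continuous_const (WeakDual.eval_continuous φ)
    · refine isClosed_biInter fun p _ => ?_
      exact isClosed_eq (WeakDual.eval_continuous p.1) continuous_const
    · exact isClosed_le (WeakDual.eval_continuous d) continuous_const
end
end

section
/- Let X_{0,n}, Y_{0,n} be Polish spaces and d_{0,n} : X_{0,n} × Y_{0,n} → [0,∞] a measurable, nonnegative, extended real-valued function such that for μ-almost all x^n ∈ X_{0,n} the map y^n ↦ d_{0,n}(x^n, y^n) is continuous on Y_{0,n}, and d_{0,n} ∈ L_1(μ, BC(Y_{0,n})). For D ∈ [0,∞), if the set Q_{0,n}(D) = { q ∈ Q_ad : ∫_{X_{0,n}} ( ∫_{Y_{0,n}} d_{0,n}(x^n,y^n) q(dy^n; x^n) ) μ(dx^n) ≤ D } is nonempty, then Q_{0,n}(D) is a weak*-closed subset of Q_ad and hence weak*-compact. -/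
open MeasureTheory ProbabilityTheory BoundedContinuousFunction
open scoped ENNReal

noncomputable section

variable {n : ℕ} {X Y : ℕ → Type}
  [∀ i, MeasurableSpace (X i)] [∀ i, TopologicalSpace (X i)]
  [∀ i, PolishSpace (X i)] [∀ i, BorelSpace (X i)]
  [∀ i, MeasurableSpace (Y i)] [∀ i, TopologicalSpace (Y i)]
  [∀ i, PolishSpace (Y i)] [∀ i, BorelSpace (Y i)]
  (μ : Measure (Xn X n)) [IsProbabilityMeasure μ]

set_option maxHeartbeats 1000000 in
/-- Let `d_{0,n} : X_{0,n} × Y_{0,n} → [0,∞]` be measurable, nonnegative,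
extended real-valued, with `y^n ↦ d_{0,n}(x^n, y^n)` continuous for μ-almost all `x^n`, and
`d_{0,n} ∈ L_1(μ, BC(Y_{0,n}))` (represented there by `φ`). For `D ∈ [0,∞)`, if the set
`Q_{0,n}(D) = { q ∈ Q_ad : ∫∫ d_{0,n} dq dμ ≤ D }` is nonempty, then it is a weak*-closed
subset of `Q_ad` and hence weak*-compact. -/
theorem constraint_set_weakStar_closed_compact
    (d : Xn X n → Yn Y n → ℝ≥0∞)
    (hd_meas : Measurable (Function.uncurry d))
    (hd_cont : ∀ᵐ x ∂μ, Continuous (fun y => d x y))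
    (φ : L1BC X Y n μ)
    (hφ : ∀ᵐ x ∂μ, ∀ y, d x y ≠ ∞ ∧ φ x y = (d x y).toReal)
    (D : ℝ) (hD : 0 ≤ D)
    (hne : {Q : Lwinf X Y n μ | Q ∈ Qad μ ∧ Q φ ≤ D}.Nonempty) :
    IsClosed {Q : Lwinf X Y n μ | Q ∈ Qad μ ∧ Q φ ≤ D} ∧
    IsCompact {Q : Lwinf X Y n μ | Q ∈ Qad μ ∧ Q φ ≤ D} := by
  classical
  set S := {Q : Lwinf X Y n μ | Q ∈ Qad μ ∧ Q φ ≤ D} with hS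
  have hcont : ∀ χ : L1BC X Y n μ, Continuous fun Q : Lwinf X Y n μ => Q χ :=
    fun χ => WeakDual.eval_continuous χ
  -- Qad is weak*-closed
  have hQadClosed : IsClosed (Qad (X := X) (Y := Y) μ) := by
    have heq : Qad (X := X) (Y := Y) μ =
        (⋂ χ : L1BC X Y n μ, ⋂ _ : (∀ᵐ x ∂μ, ∀ y, 0 ≤ χ x y),
          {Q : Lwinf X Y n μ | 0 ≤ Q χ}) ∩
        (⋂ χ : L1BC X Y n μ, ⋂ g : Xn X n → ℝ,
          ⋂ _ : (∀ᵐ x ∂μ, χ x = BoundedContinuousFunction.const (Yn Y n) (g x)),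
          {Q : Lwinf X Y n μ | Q χ = ∫ x, g x ∂μ}) := by
      ext Q
      simp [Qad, Set.mem_iInter]
    rw [heq]
    refine IsClosed.inter ?_ ?_
    · exact isClosed_iInter fun χ => isClosed_iInter fun _ =>
        isClosed_le continuous_const (hcont χ)
    · exact isClosed_iInter fun χ => isClosed_iInter fun g => isClosed_iInter fun _ =>
        isClosed_eq (hcont χ) continuous_const
  have hSClosed : IsClosed S := by
    have : S = Qad (X := X) (Y := Y) μ ∩ {Q : Lwinf X Y n μ | Q φ ≤ D} := rfl
    rw [this]
    exact hQadClosed.inter (isClosed_le (hcont φ) continuous_const)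
  refine ⟨hSClosed, ?_⟩
  -- norm bound : every Q ∈ Qad has ‖Q‖ ≤ 1
  have hlip : LipschitzWith 1 (fun r : ℝ => BoundedContinuousFunction.const (Yn Y n) r) := by
    refine LipschitzWith.of_dist_le_mul fun a b => ?_
    rw [NNReal.coe_one, one_mul, BoundedContinuousFunction.dist_le dist_nonneg]
    intro y
    exact le_of_eq rfl
  have hbound : S ⊆ WeakDual.toStrongDual ⁻¹' Metric.closedBall 0 1 := by
    rintro Q ⟨⟨hpos, hconst⟩, -⟩
    simp only [Set.mem_preimage, Metric.mem_closedBall, dist_zero_right]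
    refine ContinuousLinearMap.opNorm_le_bound _ zero_le_one fun χ => ?_
    -- build ψ = x ↦ const ‖χ x‖ as an element of L1BC
    have hmeasf : AEStronglyMeasurable
        (fun x => BoundedContinuousFunction.const (Yn Y n) ‖χ x‖) μ :=
      hlip.continuous.comp_aestronglyMeasurable (Lp.aestronglyMeasurable χ).norm
    have hmem : MemLp (fun x => BoundedContinuousFunction.const (Yn Y n) ‖χ x‖) 1 μ := by
      refine MemLp.of_le (Lp.memLp χ) hmeasf ?_
      filter_upwards with x
      calc ‖BoundedContinuousFunction.const (Yn Y n) ‖χ x‖‖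
          ≤ ‖(‖χ x‖)‖ := BoundedContinuousFunction.norm_const_le _
        _ = ‖χ x‖ := norm_norm _
    set ψ : L1BC X Y n μ := hmem.toLp _ with hψ
    have hψae : ∀ᵐ x ∂μ, ψ x = BoundedContinuousFunction.const (Yn Y n) ‖χ x‖ :=
      hmem.coeFn_toLp
    have hQψ : Q ψ = ∫ x, ‖χ x‖ ∂μ := hconst ψ (fun x => ‖χ x‖) hψae
    have hnorm : ∫ x, ‖χ x‖ ∂μ = ‖χ‖ := (L1.norm_eq_integral_norm χ).symm
    -- 0 ≤ Q (ψ - χ)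
    have h1 : 0 ≤ Q (ψ - χ) := by
      refine hpos _ ?_
      filter_upwards [hψae, Lp.coeFn_sub ψ χ] with x hx hx2
      intro y
      rw [hx2]
      simp only [Pi.sub_apply, BoundedContinuousFunction.coe_sub, hx,
        BoundedContinuousFunction.const_apply, sub_nonneg]
      calc (χ x) y ≤ ‖(χ x) y‖ := le_abs_self _
        _ ≤ ‖χ x‖ := BoundedContinuousFunction.norm_coe_le_norm _ _
    have h2 : 0 ≤ Q (ψ + χ) := by
      refine hpos _ ?_
      filter_upwards [hψae, Lp.coeFn_add ψ χ] with x hx hx2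
      intro y
      rw [hx2]
      simp only [Pi.add_apply, BoundedContinuousFunction.coe_add, hx,
        BoundedContinuousFunction.const_apply]
      have : -(χ x) y ≤ ‖(χ x) y‖ := neg_le_abs _
      have h3 : -(χ x) y ≤ ‖χ x‖ :=
        this.trans (BoundedContinuousFunction.norm_coe_le_norm _ _)
      linarith
    rw [map_sub] at h1
    rw [map_add] at h2
    have hrfl : (WeakDual.toStrongDual Q) χ = Q χ := rfl
    rw [one_mul, Real.norm_eq_abs, add_zero, ContinuousLinearMap.neg_apply, abs_neg, hrfl, abs_le]
    constructor
    · rw [hQψ, hnorm] at h2; linarith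
    · rw [hQψ, hnorm] at h1; linarith
  exact (WeakDual.isCompact_closedBall (𝕜 := ℝ) 0 1).of_isClosed_subset hSClosed hbound
end
end

section
/- Suppose the realizability constraint set Q⃗_ad is weak*-closed, and let d_{0,n} : X_{0,n} × Y_{0,n} → [0,∞] be measurable, nonnegative, with y^n ↦ d_{0,n}(x^n, y^n) continuous on Y_{0,n} for μ-almost all x^n, and d_{0,n} ∈ L_1(μ, BC(Y_{0,n})). For D ∈ [0,∞), if the set Q⃗_{0,n}(D) = { q ∈ Q⃗_ad : ∫_{X_{0,n}} ( ∫_{Y_{0,n}} d_{0,n}(x^n,y^n) q(dy^n; x^n) ) μ(dx^n) ≤ D } is nonempty, then Q⃗_{0,n}(D) is a weak*-closed subset of Q⃗_ad and hence weak*-compact. -/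
open MeasureTheory ProbabilityTheory BoundedContinuousFunction
open scoped ENNReal

noncomputable section

variable {n : ℕ} {X Y : ℕ → Type}
  [∀ i, MeasurableSpace (X i)] [∀ i, TopologicalSpace (X i)]
  [∀ i, PolishSpace (X i)] [∀ i, BorelSpace (X i)]
  [∀ i, MeasurableSpace (Y i)] [∀ i, TopologicalSpace (Y i)]
  [∀ i, PolishSpace (Y i)] [∀ i, BorelSpace (Y i)]
  (μ : Measure (Xn X n)) [IsProbabilityMeasure μ]

/-- Iterated convolution (composition) of a sequence of transition measures
`q i : (y^{i-1}, a) ↦ Measure (Y i)`, producing a measure on the product `∀ j : Fin (k+1), Y j`. -/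
noncomputable def comp {Y : ℕ → Type*} [∀ i, MeasurableSpace (Y i)] {α : Type*} :
    (k : ℕ) → (∀ i : Fin (k + 1), ((∀ j : Fin (i : ℕ), Y j) × α) → Measure (Y (i : ℕ))) →
      α → Measure (∀ j : Fin (k + 1), Y (j : ℕ))
  | 0, q, a => (q 0 (finZeroElim, a)).map (fun y => Fin.cons y finZeroElim)
  | (k + 1), q, a =>
      (comp k (fun i => q i.castSucc) a).bind
        (fun yk => (q (Fin.last (k + 1)) (yk, a)).map (Fin.snoc yk))

/-- `Q ∈ L^w_∞(μ, M_rba(Y_{0,n}))` is represented by the family of measures `K x`: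
`Q(φ) = ∫ ( ∫ φ(x, y) K(dy; x) ) μ(dx)` for all `φ ∈ L_1(μ, BC(Y_{0,n}))`. -/
def Represents (Q : Lwinf X Y n μ) (K : Xn X n → Measure (Yn Y n)) : Prop :=
  ∀ φ : L1BC X Y n μ, Q φ = ∫ x, ∫ y, φ x y ∂(K x) ∂μ

/-- The realizability constraint set `Q⃗_ad ⊆ Q_ad`: those elements represented (μ-a.s.) by a
causal product kernel `q(dy^n; x^n) = ⊗_{i=0}^n q_i(dy_i; y^{i-1}, x^i)`. -/
def vQad : Set (Lwinf X Y n μ) :=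
  {Q | Q ∈ Qad μ ∧
    ∃ qi : ∀ i : Fin (n + 1),
        Kernel ((∀ j : Fin (i : ℕ), Y j) × (∀ j : Fin ((i : ℕ) + 1), X j)) (Y (i : ℕ)),
      (∀ i, IsMarkovKernel (qi i)) ∧
        Represents μ Q
          (comp (α := Xn X n) n
            (fun i p => qi i (p.1, fun j => p.2 (Fin.castLE i.isLt j))))}

/-- Suppose the realizability constraint set `Q⃗_ad` is weak*-closed, and let
`d_{0,n} : X_{0,n} × Y_{0,n} → [0,∞]` be measurable, nonnegative, with `y^n ↦ d(x^n,y^n)`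
continuous for μ-a.a. `x^n`, and `d_{0,n} ∈ L_1(μ, BC(Y_{0,n}))` (represented there by `φ`).
For `D ∈ [0,∞)`, if `Q⃗_{0,n}(D) = { q ∈ Q⃗_ad : ∫∫ d_{0,n} dq dμ ≤ D }` is nonempty, then it
is a weak*-closed subset of `Q⃗_ad`, hence weak*-compact. -/
theorem causal_constraint_set_weakStar_closed_compact
    (hclosed : IsClosed (vQad μ : Set (Lwinf X Y n μ)))
    (d : Xn X n → Yn Y n → ℝ≥0∞)
    (hd_meas : Measurable (Function.uncurry d))
    (hd_cont : ∀ᵐ x ∂μ, Continuous (fun y => d x y))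
    (φ : L1BC X Y n μ)
    (hφ : ∀ᵐ x ∂μ, ∀ y, d x y ≠ ∞ ∧ φ x y = (d x y).toReal)
    (D : ℝ) (hD : 0 ≤ D)
    (hne : {Q : Lwinf X Y n μ | Q ∈ vQad μ ∧ Q φ ≤ D}.Nonempty) :
    IsClosed {Q : Lwinf X Y n μ | Q ∈ vQad μ ∧ Q φ ≤ D} ∧
    IsCompact {Q : Lwinf X Y n μ | Q ∈ vQad μ ∧ Q φ ≤ D} := by
  have hSclosed : IsClosed {Q : Lwinf X Y n μ | Q ∈ vQad μ ∧ Q φ ≤ D} := by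
    have : {Q : Lwinf X Y n μ | Q ∈ vQad μ ∧ Q φ ≤ D}
        = vQad μ ∩ (fun Q : Lwinf X Y n μ => Q φ) ⁻¹' Set.Iic D := rfl
    rw [this]
    exact hclosed.inter (isClosed_Iic.preimage (WeakDual.eval_continuous φ))
  refine ⟨hSclosed, ?_⟩
  -- The constant-function Lipschitz map used to dominate any `ψ`.
  have hlip : LipschitzWith 1
      (fun f : Yn Y n →ᵇ ℝ => BoundedContinuousFunction.const (Yn Y n) ‖f‖) := by
    refine LipschitzWith.of_dist_le_mul fun f f' => ?_
    rw [NNReal.coe_one, one_mul, dist_eq_norm, dist_eq_norm]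
    have hsub : BoundedContinuousFunction.const (Yn Y n) ‖f‖ -
        BoundedContinuousFunction.const (Yn Y n) ‖f'‖
          = BoundedContinuousFunction.const (Yn Y n) (‖f‖ - ‖f'‖) := by
      ext y; simp
    rw [hsub]
    exact le_trans (BoundedContinuousFunction.norm_const_le _)
      (by simpa using abs_norm_sub_norm_le f f')
  have hzero : (fun f : Yn Y n →ᵇ ℝ => BoundedContinuousFunction.const (Yn Y n) ‖f‖) 0 = 0 := by
    ext y; simp
  -- Every element of `Qad` has dual norm at most 1.
  have hnorm : ∀ Q : Lwinf X Y n μ, Q ∈ Qad μ → ∀ ψ : L1BC X Y n μ, |Q ψ| ≤ ‖ψ‖ := by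
    intro Q hQ ψ
    set gψ : L1BC X Y n μ := hlip.compLp hzero ψ with hgψ
    have hcoe : gψ =ᵐ[μ] fun x => BoundedContinuousFunction.const (Yn Y n) ‖ψ x‖ :=
      hlip.coeFn_compLp hzero ψ
    have hQg : Q gψ = ∫ x, ‖ψ x‖ ∂μ := by
      refine hQ.2 gψ (fun x => ‖ψ x‖) ?_
      filter_upwards [hcoe] with x hx using hx
    have hQgnorm : Q gψ = ‖ψ‖ := by
      rw [hQg, L1.norm_eq_integral_norm]
    have h1 : 0 ≤ Q (gψ - ψ) := by
      refine hQ.1 _ ?_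
      filter_upwards [Lp.coeFn_sub gψ ψ, hcoe] with x hx hx' y
      have := (ψ x).norm_coe_le_norm y
      rw [Real.norm_eq_abs] at this
      have h2 := abs_le.mp this
      simp only [hx, Pi.sub_apply, hx', BoundedContinuousFunction.sub_apply,
        BoundedContinuousFunction.const_apply]
      linarith [h2.2]
    have h2 : 0 ≤ Q (gψ + ψ) := by
      refine hQ.1 _ ?_
      filter_upwards [Lp.coeFn_add gψ ψ, hcoe] with x hx hx' y
      have := (ψ x).norm_coe_le_norm y
      rw [Real.norm_eq_abs] at this
      have h2 := abs_le.mp this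
      simp only [hx, Pi.add_apply, hx', BoundedContinuousFunction.add_apply,
        BoundedContinuousFunction.const_apply]
      linarith [h2.1]
    rw [map_sub] at h1
    rw [map_add] at h2
    rw [abs_le, ← hQgnorm]
    constructor <;> linarith
  -- The constraint set sits inside the unit ball of the dual.
  have hsub : {Q : Lwinf X Y n μ | Q ∈ vQad μ ∧ Q φ ≤ D}
      ⊆ WeakDual.toStrongDual ⁻¹' Metric.closedBall 0 1 := by
    intro Q hQ
    simp only [Set.mem_preimage, Metric.mem_closedBall, dist_zero_right]
    refine ContinuousLinearMap.opNorm_le_bound _ zero_le_one fun ψ => ?_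
    rw [one_mul, Real.norm_eq_abs]
    rw [add_zero, ContinuousLinearMap.neg_apply, abs_neg]
    exact hnorm Q hQ.1.1 ψ
  exact (WeakDual.isCompact_closedBall (𝕜 := ℝ) 0 1).of_isClosed_subset hSclosed hsub
end
end
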